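/- arXiv:0904.3624 — 3 statements merged into one kernel-verified Lean document; each statement's English description precedes it below -/
import Mathlib

section
/- Let B be a commutative ring and I ⊂ B an ideal generated by a regular sequence of length r. Then the associated graded ring gr_I(B) = ⊕_{n≥0} Iⁿ/Iⁿ⁺¹ is isomorphic as a graded (B/I)-algebra to the polynomial ring (B/I)[T₁,…,Tᵣ]; in particular each Iⁿ/Iⁿ⁺¹ is a free B/I-module of rank equal to the number of monomials of degree n in r variables. -/
namespace AGPF
open Finsupp

variable {B : Type*} [CommRing B]

/-- total degree -/
def deg {r : ℕ} (d : Fin r →₀ ℕ) : ℕ := d.sum fun _ m => m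

lemma deg_eq_sum {r : ℕ} (d : Fin r →₀ ℕ) : deg d = ∑ i, d i :=
  Finsupp.sum_fintype _ _ (fun _ => rfl)

lemma apply_le_deg {r : ℕ} (d : Fin r →₀ ℕ) (i : Fin r) : d i ≤ deg d := by
  rw [deg_eq_sum]
  exact Finset.single_le_sum (f := fun j => d j) (fun _ _ => Nat.zero_le _) (Finset.mem_univ i)

lemma deg_add {r : ℕ} (a b : Fin r →₀ ℕ) : deg (a + b) = deg a + deg b := by
  simp only [deg_eq_sum, Finsupp.add_apply, Finset.sum_add_distrib]

lemma deg_single {r : ℕ} (i : Fin r) (k : ℕ) : deg (Finsupp.single i k) = k := by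
  rw [deg, Finsupp.sum_single_index]; rfl

lemma deg_eq_zero {r : ℕ} {d : Fin r →₀ ℕ} (h : deg d = 0) : d = 0 := by
  ext i
  have h2 := apply_le_deg d i
  rw [h] at h2
  simpa using Nat.le_zero.mp h2

/-- the monomial x^d -/
def mono {r : ℕ} (x : Fin r → B) (d : Fin r →₀ ℕ) : B := ∏ i, x i ^ d i

lemma mono_add {r : ℕ} (x : Fin r → B) (a b : Fin r →₀ ℕ) :
    mono x (a + b) = mono x a * mono x b := by
  simp [mono, pow_add, Finset.prod_mul_distrib]

lemma mono_single {r : ℕ} (x : Fin r → B) (i : Fin r) (k : ℕ) :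
    mono x (Finsupp.single i k) = x i ^ k := by
  rw [mono]
  rw [Finset.prod_eq_single i (fun j _ hj => by rw [Finsupp.single_eq_of_ne' (Ne.symm hj), pow_zero])
    (fun h => absurd (Finset.mem_univ i) h)]
  rw [Finsupp.single_eq_same]

lemma mono_mem {r : ℕ} (x : Fin r → B) {n : ℕ} {d : Fin r →₀ ℕ} (hd : deg d = n) :
    mono x d ∈ (Ideal.span (Set.range x)) ^ n := by
  induction n generalizing d with
  | zero => simp
  | succ n ih =>
    have hne : ∃ i, d i ≠ 0 := by
      by_contra h
      push_neg at h
      have : d = 0 := Finsupp.ext h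
      rw [this] at hd
      simp [deg, Finsupp.sum_zero_index] at hd
    obtain ⟨i, hi⟩ := hne
    have hdec : d = Finsupp.single i 1 + (d - Finsupp.single i 1) := by
      ext j
      by_cases hji : j = i
      · subst hji
        simp only [Finsupp.add_apply, Finsupp.single_eq_same, Finsupp.tsub_apply,
          Finsupp.single_eq_same]
        omega
      · simp only [Finsupp.add_apply, Finsupp.single_eq_of_ne' (Ne.symm hji),
          Finsupp.tsub_apply, Finsupp.single_eq_of_ne' (Ne.symm hji)]
        omega
    have hdeg' : deg (d - Finsupp.single i 1) = n := by
      have := deg_add (Finsupp.single i 1) (d - Finsupp.single i 1)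
      rw [← hdec, hd, deg_single] at this
      omega
    rw [hdec, mono_add, mono_single, pow_one, pow_succ']
    exact Ideal.mul_mem_mul (Ideal.subset_span ⟨i, rfl⟩) (ih hdeg')

/-- The degree-n monomial index type. -/
abbrev Mon (r n : ℕ) : Type := {d : Fin r →₀ ℕ // (d.sum fun _ m => m) = n}

lemma Mon.deg_eq {r n : ℕ} (d : Mon r n) : deg d.1 = n := d.2

/-- the linear map sending a coefficient family to Σ c_d x^d -/
noncomputable def phi {r : ℕ} (x : Fin r → B) (n : ℕ) : (Mon r n →₀ B) →ₗ[B] B :=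
  Finsupp.linearCombination B (fun d => mono x d.1)

lemma phi_apply {r : ℕ} (x : Fin r → B) (n : ℕ) (f : Mon r n →₀ B) :
    phi x n f = f.sum fun d c => c * mono x d.1 := by
  rw [phi, Finsupp.linearCombination_apply]
  simp [smul_eq_mul]

lemma span_mono_eq {r : ℕ} (x : Fin r → B) (n : ℕ) :
    Ideal.span (Set.range fun d : Mon r n => mono x d.1) = (Ideal.span (Set.range x)) ^ n := by
  induction n with
  | zero =>
    rw [pow_zero, Ideal.one_eq_top, eq_top_iff, ← Ideal.span_singleton_one]
    apply Ideal.span_mono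
    rintro a rfl
    exact ⟨⟨0, by simp [Finsupp.sum_zero_index]⟩, by simp [mono]⟩
  | succ n ih =>
    rw [pow_succ', ← ih, Ideal.span_mul_span]
    apply le_antisymm
    · rw [Ideal.span_le]
      rintro a ⟨e, rfl⟩
      have hne : ∃ i, e.1 i ≠ 0 := by
        by_contra h
        push_neg at h
        have h0 : e.1 = 0 := Finsupp.ext h
        have := e.deg_eq
        rw [h0] at this
        simp [deg, Finsupp.sum_zero_index] at this
      obtain ⟨i, hi⟩ := hne
      have hdec : e.1 = Finsupp.single i 1 + (e.1 - Finsupp.single i 1) := by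
        ext j
        by_cases hji : j = i
        · subst hji; simp only [Finsupp.add_apply, Finsupp.single_eq_same,
            Finsupp.tsub_apply, Finsupp.single_eq_same]; omega
        · simp only [Finsupp.add_apply, Finsupp.single_eq_of_ne' (Ne.symm hji),
            Finsupp.tsub_apply, Finsupp.single_eq_of_ne' (Ne.symm hji)]; omega
      have hdeg' : deg (e.1 - Finsupp.single i 1) = n := by
        have := deg_add (Finsupp.single i 1) (e.1 - Finsupp.single i 1)
        rw [← hdec, e.deg_eq, deg_single] at this
        omega
      apply Ideal.subset_span
      simp only [Set.mem_iUnion₂, Set.mem_iUnion, Set.mem_range]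
      exact ⟨x i, ⟨i, rfl⟩, mono x (e.1 - Finsupp.single i 1), ⟨⟨_, hdeg'⟩, rfl⟩,
        by beta_reduce; rw [← pow_one (x i), ← mono_single x i 1,
          ← mono_add, ← hdec]⟩

    · rw [Ideal.span_le]
      intro a ha
      rw [Set.mem_mul] at ha
      obtain ⟨s, ⟨i, rfl⟩, t, ⟨d, rfl⟩, rfl⟩ := ha
      apply Ideal.subset_span
      refine ⟨⟨Finsupp.single i 1 + d.1, ?_⟩, ?_⟩
      · show deg _ = n + 1
        rw [deg_add, deg_single, d.deg_eq]
        omega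
      · show mono x _ = _
        rw [mono_add, mono_single, pow_one]
lemma range_phi {r : ℕ} (x : Fin r → B) (n : ℕ) :
    LinearMap.range (phi x n) = ((Ideal.span (Set.range x)) ^ n : Ideal B) := by
  rw [phi, Finsupp.range_linearCombination]
  exact span_mono_eq x n

section Fiber

variable {r : ℕ}

/-- extend a multi-index on `Fin r` by value `j` at the last coordinate -/
noncomputable def emb (j : ℕ) (e : Fin r →₀ ℕ) : Fin (r + 1) →₀ ℕ :=
  Finsupp.embDomain ⟨Fin.castSucc, Fin.castSucc_injective r⟩ e + Finsupp.single (Fin.last r) j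

lemma emb_apply_castSucc (j : ℕ) (e : Fin r →₀ ℕ) (i : Fin r) :
    emb j e i.castSucc = e i := by
  have h1 : Finsupp.embDomain ⟨Fin.castSucc, Fin.castSucc_injective r⟩ e i.castSucc = e i :=
    Finsupp.embDomain_apply_self _ e i
  have h2 : Finsupp.single (Fin.last r) j i.castSucc = 0 :=
    Finsupp.single_eq_of_ne' (Fin.ne_last_of_lt i.castSucc_lt_last).symm
  simp [emb, h1, h2]

lemma emb_apply_last (j : ℕ) (e : Fin r →₀ ℕ) : emb j e (Fin.last r) = j := by
  have h1 : Finsupp.embDomain ⟨Fin.castSucc, Fin.castSucc_injective r⟩ e (Fin.last r) = 0 := by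
    apply Finsupp.embDomain_notin_range
    rintro ⟨i, hi⟩
    exact Fin.ne_last_of_lt i.castSucc_lt_last hi
  simp [emb, h1]

lemma deg_emb (j : ℕ) (e : Fin r →₀ ℕ) : deg (emb j e) = deg e + j := by
  rw [deg_eq_sum, Fin.sum_univ_castSucc]
  simp only [emb_apply_castSucc, emb_apply_last]
  rw [deg_eq_sum]

lemma emb_injective (j : ℕ) : Function.Injective (emb (r := r) j) := by
  intro a b h
  ext i
  have := congrArg (fun v => v i.castSucc) h
  simpa [emb_apply_castSucc] using this

/-- drop the last coordinate of a multi-index -/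
noncomputable def restrict (d : Fin (r + 1) →₀ ℕ) : Fin r →₀ ℕ :=
  Finsupp.comapDomain Fin.castSucc d ((Fin.castSucc_injective r).injOn)

lemma restrict_apply (d : Fin (r + 1) →₀ ℕ) (i : Fin r) : restrict d i = d i.castSucc :=
  Finsupp.comapDomain_apply _ _ _ _

lemma restrict_emb (j : ℕ) (e : Fin r →₀ ℕ) : restrict (emb j e) = e := by
  ext i; rw [restrict_apply, emb_apply_castSucc]

lemma emb_restrict (d : Fin (r + 1) →₀ ℕ) : emb (d (Fin.last r)) (restrict d) = d := by
  ext i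
  induction i using Fin.lastCases with
  | last => rw [emb_apply_last]
  | cast i => rw [emb_apply_castSucc, restrict_apply]

lemma deg_restrict (d : Fin (r + 1) →₀ ℕ) :
    deg (restrict d) + d (Fin.last r) = deg d := by
  rw [deg_eq_sum, deg_eq_sum, Fin.sum_univ_castSucc]
  simp only [restrict_apply]

lemma mono_emb {B : Type*} [CommRing B] (x : Fin (r + 1) → B) (j : ℕ) (e : Fin r →₀ ℕ) :
    mono x (emb j e) = mono (x ∘ Fin.castSucc) e * x (Fin.last r) ^ j := by
  rw [mono, Fin.prod_univ_castSucc]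
  simp only [emb_apply_castSucc, emb_apply_last]
  rfl

/-- `emb` on the level of degree-`n` monomials -/
noncomputable def membMon (n j : ℕ) (hj : j ≤ n) (e : Mon r (n - j)) : Mon (r + 1) n :=
  ⟨emb j e.1, by
    show deg _ = n
    rw [deg_emb, e.deg_eq]
    omega⟩

lemma membMon_injective (n j : ℕ) (hj : j ≤ n) :
    Function.Injective (membMon (r := r) n j hj) := fun a b h =>
  Subtype.ext (emb_injective j (congrArg Subtype.val h))

/-- `restrict` on the level of monomials -/
noncomputable def splitMon (n j : ℕ) (d : Mon (r + 1) n) (h : d.1 (Fin.last r) = j) :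
    Mon r (n - j) :=
  ⟨restrict d.1, by
    show deg _ = n - j
    have := deg_restrict d.1
    rw [d.deg_eq, h] at this
    omega⟩

lemma membMon_splitMon (n j : ℕ) (hj : j ≤ n) (d : Mon (r + 1) n)
    (h : d.1 (Fin.last r) = j) : membMon n j hj (splitMon n j d h) = d := by
  apply Subtype.ext
  show emb j (restrict d.1) = d.1
  rw [← h]
  exact emb_restrict d.1

lemma splitMon_membMon (n j : ℕ) (hj : j ≤ n) (e : Mon r (n - j))
    (h : (membMon n j hj e).1 (Fin.last r) = j) :
    splitMon n j (membMon n j hj e) h = e :=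
  Subtype.ext (restrict_emb j e.1)

/-- the fiber of a coefficient family over last-exponent `j` -/
noncomputable def fiber {B : Type*} [CommRing B] {n : ℕ} (f : Mon (r + 1) n →₀ B)
    (j : ℕ) (hj : j ≤ n) : Mon r (n - j) →₀ B :=
  Finsupp.comapDomain (membMon n j hj) f ((membMon_injective n j hj).injOn)

lemma fiber_apply {B : Type*} [CommRing B] {n : ℕ} (f : Mon (r + 1) n →₀ B)
    (j : ℕ) (hj : j ≤ n) (e : Mon r (n - j)) :
    fiber f j hj e = f (membMon n j hj e) :=
  Finsupp.comapDomain_apply _ _ _ _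

lemma phi_decomp {B : Type*} [CommRing B] (x : Fin (r + 1) → B) (n : ℕ)
    (f : Mon (r + 1) n →₀ B) (g : ℕ → B)
    (hg : ∀ j (hj : j ≤ n), g j = phi (x ∘ Fin.castSucc) (n - j) (fiber f j hj)) :
    phi x n f = ∑ j ∈ Finset.range (n + 1), x (Fin.last r) ^ j * g j := by
  classical
  rw [phi_apply, Finsupp.sum]
  rw [← Finset.sum_fiberwise_of_maps_to (g := fun d : Mon (r + 1) n => d.1 (Fin.last r))
    (t := Finset.range (n + 1))
    (fun d _ => Finset.mem_range.mpr (by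
      show d.1 (Fin.last r) < n + 1
      have := apply_le_deg d.1 (Fin.last r)
      rw [d.deg_eq] at this
      omega))]
  apply Finset.sum_congr rfl
  intro j hj
  have hjn : j ≤ n := by
    have := Finset.mem_range.mp hj
    omega
  rw [hg j hjn, phi_apply, Finsupp.sum, Finset.mul_sum]
  refine Finset.sum_bij' (fun d hd => splitMon n j d (Finset.mem_filter.mp hd).2)
    (fun e _ => membMon n j hjn e) ?_ ?_ ?_ ?_ ?_
  · intro d hd
    have h2 := (Finset.mem_filter.mp hd).2
    apply Finsupp.mem_support_iff.mpr
    rw [fiber_apply, membMon_splitMon n j hjn d h2]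
    exact Finsupp.mem_support_iff.mp (Finset.mem_filter.mp hd).1
  · intro e he
    have hne : f (membMon n j hjn e) ≠ 0 := by
      rw [← fiber_apply f j hjn e]
      exact Finsupp.mem_support_iff.mp he
    exact Finset.mem_filter.mpr ⟨Finsupp.mem_support_iff.mpr hne, emb_apply_last j e.1⟩
  · intro d hd
    exact membMon_splitMon n j hjn d (Finset.mem_filter.mp hd).2
  · intro e he
    exact splitMon_membMon n j hjn e _
  · intro d hd
    have h2 := (Finset.mem_filter.mp hd).2
    show f d * mono x d.1 = _ * (fiber f j hjn (splitMon n j d h2) * mono _ (splitMon n j d h2).1)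
    rw [fiber_apply, membMon_splitMon n j hjn d h2]
    have hmono : mono x d.1 = mono (x ∘ Fin.castSucc) (restrict d.1) * x (Fin.last r) ^ j := by
      conv_lhs => rw [← membMon_splitMon n j hjn d h2]
      exact mono_emb x j (restrict d.1)
    rw [hmono]
    have hsp : ((splitMon n j d h2 : Mon r (n - j)) : Fin r →₀ ℕ) = restrict d.1 := rfl
    rw [hsp]
    ring

end Fiber

open RingTheory.Sequence in
theorem quasireg : ∀ {r : ℕ} (x : Fin r → B), IsWeaklyRegular B (List.ofFn x) →
    ∀ (n : ℕ) (f : Mon r n →₀ B),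
      phi x n f ∈ (Ideal.span (Set.range x)) ^ (n + 1) →
      ∀ d : Mon r n, f d ∈ Ideal.span (Set.range x) := by
  intro r
  induction r with
  | zero =>
    intro x _ n f hf d
    have hbot : Ideal.span (Set.range x) = ⊥ := by
      rw [Set.range_eq_empty x, Ideal.span_empty]
    rw [hbot]
    rw [hbot] at hf
    have h0 : phi x n f = 0 := by
      have := Ideal.pow_le_self (Nat.succ_ne_zero n) hf
      simpa using this
    have hsingle : f = Finsupp.single d (f d) := by
      ext e
      have he : e = d := Subtype.ext (by ext i; exact i.elim0)
      rw [he, Finsupp.single_eq_same]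
    have hval : phi x n f = f d := by
      conv_lhs => rw [hsingle]
      rw [phi, Finsupp.linearCombination_single]
      have h1 : mono x d.1 = 1 := by simp [mono]
      rw [h1, smul_eq_mul, mul_one]
    rw [Ideal.mem_bot, ← hval]
    exact h0
  | succ r IH =>
    intro x hx n f hf d
    classical
    set x' : Fin r → B := x ∘ Fin.castSucc with hx'def
    set y : B := x (Fin.last r) with hydef
    set I' : Ideal B := Ideal.span (Set.range x') with hI'def
    set I : Ideal B := Ideal.span (Set.range x) with hIdef
    have hofn : List.ofFn x = List.ofFn x' ++ [y] := by
      rw [List.ofFn_succ', List.concat_eq_append]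
      rfl
    rw [hofn, RingTheory.Sequence.isWeaklyRegular_append_iff] at hx
    obtain ⟨hx', hy0⟩ := hx
    have hofl : Ideal.ofList (List.ofFn x') = I' := by
      show Ideal.span _ = Ideal.span _
      congr 1
      ext a
      simp [List.mem_ofFn]
    -- y is a nonzerodivisor mod I'
    have hyreg : ∀ b : B, y * b ∈ I' → b ∈ I' := by
      intro b hb
      rw [hofl] at hy0
      have hsm : IsSMulRegular (B ⧸ (I' • ⊤ : Submodule B B)) y :=
        (RingTheory.Sequence.isWeaklyRegular_singleton_iff _ y).mp hy0
      have htop : (I' • ⊤ : Submodule B B) = I' := by rw [smul_eq_mul, Ideal.mul_top]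
      have h0 : y • (Submodule.Quotient.mk b : B ⧸ (I' • ⊤ : Submodule B B)) = y • (0 : B ⧸ (I' • ⊤ : Submodule B B)) := by
        rw [smul_zero, ← Submodule.Quotient.mk_smul, Submodule.Quotient.mk_eq_zero, htop,
          smul_eq_mul]
        exact hb
      have := hsm h0
      rwa [Submodule.Quotient.mk_eq_zero, htop] at this
    have hI'I : I' ≤ I := Ideal.span_mono (by rintro a ⟨i, rfl⟩; exact ⟨i.castSucc, rfl⟩)
    have hyI : y ∈ I := Ideal.subset_span ⟨Fin.last r, rfl⟩
    -- y is a nonzerodivisor mod every power of I'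
    have hL : ∀ (k : ℕ) (b : B), y * b ∈ I' ^ k → b ∈ I' ^ k := by
      intro k
      induction k with
      | zero => intro b _; simpa using Submodule.mem_top
      | succ k ihk =>
        intro b hb
        have hbk : b ∈ I' ^ k := ihk b (Ideal.pow_le_pow_right (Nat.le_succ k) hb)
        obtain ⟨g, hg⟩ : ∃ g : Mon r k →₀ B, phi x' k g = b := by
          have hmem : b ∈ LinearMap.range (phi x' k) := by rw [range_phi]; exact hbk
          obtain ⟨g, hg⟩ := hmem; exact ⟨g, hg⟩
        have hyg : phi x' k (y • g) = y * b := by rw [map_smul, hg, smul_eq_mul]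
        have hcoef : ∀ e : Mon r k, y * g e ∈ I' := by
          intro e
          have := IH x' hx' k (y • g) (by rw [hyg]; exact hb) e
          simpa [Finsupp.smul_apply, smul_eq_mul] using this
        rw [← hg, phi_apply, Finsupp.sum]
        apply Submodule.sum_mem
        intro e _
        rw [pow_succ']
        exact Ideal.mul_mem_mul (hyreg _ (hcoef e)) (mono_mem x' e.deg_eq)
    -- decomposition of elements of I^s
    have hD : ∀ (s : ℕ) (u : B), u ∈ I ^ s → ∃ h : ℕ → B,
        (∀ j, h j ∈ I' ^ (s - j)) ∧ u = ∑ j ∈ Finset.range (s + 1), y ^ j * h j := by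
      intro s u hu
      obtain ⟨F, hF⟩ : ∃ F : Mon (r + 1) s →₀ B, phi x s F = u := by
        have hmem : u ∈ LinearMap.range (phi x s) := by rw [range_phi]; exact hu
        obtain ⟨F, hF⟩ := hmem; exact ⟨F, hF⟩
      refine ⟨fun j => if hj : j ≤ s then phi x' (s - j) (fiber F j hj) else 0, ?_, ?_⟩
      · intro j
        by_cases hj : j ≤ s
        · simp only [dif_pos hj]
          have hmem : phi x' (s - j) (fiber F j hj) ∈ LinearMap.range (phi x' (s - j)) :=
            ⟨_, rfl⟩
          rw [range_phi] at hmem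
          exact hmem
        · simp only [dif_neg hj]
          exact Submodule.zero_mem _
      · rw [← hF]
        exact phi_decomp x s F _ (fun j hj => by simp only [dif_pos hj]; rfl)
    -- a little algebraic identity
    have hfact : ∀ (c : ℕ → B) (m : ℕ), ∑ k ∈ Finset.range (m + 1), y ^ k * c k
        = c 0 + y * ∑ k ∈ Finset.range m, y ^ k * c (k + 1) := by
      intro c m
      rw [Finset.sum_range_succ' (fun k => y ^ k * c k) m, Finset.mul_sum]
      rw [add_comm]
      congr 1
      · simp
      · apply Finset.sum_congr rfl
        intro k _
        rw [pow_succ']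
        ring
    -- the key cancellation lemma
    have hS : ∀ (m : ℕ) (g h : ℕ → B),
        (∀ j, g j ∈ I' ^ (m - j)) → (∀ j, h j ∈ I' ^ (m + 1 - j)) →
        (∑ j ∈ Finset.range (m + 1), y ^ j * g j = ∑ j ∈ Finset.range (m + 2), y ^ j * h j) →
        ∀ j, ∃ q ∈ I' ^ (m - j), g j - y * q ∈ I' ^ (m + 1 - j) := by
      intro m
      induction m with
      | zero =>
        intro g h hg hh heq j
        rcases Nat.eq_zero_or_pos j with rfl | hj
        · refine ⟨h 1, by simpa using hh 1, ?_⟩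
          have hg0 : g 0 = h 0 + y * h 1 := by
            simpa [Finset.sum_range_succ, Finset.sum_range_one, pow_succ] using heq
          have : g 0 - y * h 1 = h 0 := by rw [hg0]; ring
          rw [this]
          simpa using hh 0
        · refine ⟨0, Submodule.zero_mem _, ?_⟩
          have h10 : 0 + 1 - j = 0 := by omega
          rw [h10, mul_zero, sub_zero, pow_zero, Ideal.one_eq_top]
          exact Submodule.mem_top
      | succ m ihm =>
        intro g h hg hh heq j
        set A := ∑ k ∈ Finset.range (m + 1), y ^ k * g (k + 1) with hA
        set Bb := ∑ k ∈ Finset.range (m + 2), y ^ k * h (k + 1) with hB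
        have e1 : ∑ k ∈ Finset.range (m + 2), y ^ k * g k = g 0 + y * A := hfact g (m + 1)
        have e2 : ∑ k ∈ Finset.range (m + 3), y ^ k * h k = h 0 + y * Bb := hfact h (m + 2)
        have heq2 : g 0 + y * A = h 0 + y * Bb := by rw [← e1, ← e2]; exact heq
        set w := Bb - A with hw
        have hyw : y * w = g 0 - h 0 := by rw [hw]; linear_combination -heq2
        have hwmem : w ∈ I' ^ (m + 1) := by
          apply hL (m + 1)
          rw [hyw]
          have h1 : g 0 ∈ I' ^ (m + 1) := by simpa using hg 0
          have h2 : h 0 ∈ I' ^ (m + 1) := by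
            have h3 := hh 0
            rw [Nat.sub_zero] at h3
            exact Ideal.pow_le_pow_right (Nat.le_succ _) h3
          exact Submodule.sub_mem _ h1 h2
        rcases j with _ | j
        · refine ⟨w, by simpa using hwmem, ?_⟩
          have : g 0 - y * w = h 0 := by rw [hyw]; ring
          rw [this]
          simpa using hh 0
        · set g' : ℕ → B := fun i => g (i + 1) with hg'def
          set h' : ℕ → B := fun i => if i = 0 then h 1 - w else h (i + 1) with hh'def
          have hg' : ∀ i, g' i ∈ I' ^ (m - i) := fun i => by
            have := hg (i + 1)
            rwa [Nat.succ_sub_succ_eq_sub] at this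
          have hh' : ∀ i, h' i ∈ I' ^ (m + 1 - i) := by
            intro i
            rcases Nat.eq_zero_or_pos i with rfl | hi
            · show (if (0:ℕ) = 0 then h 1 - w else h (0 + 1)) ∈ _
              rw [if_pos rfl]
              exact Submodule.sub_mem _ (by simpa using hh 1) hwmem
            · show (if i = 0 then h 1 - w else h (i + 1)) ∈ _
              rw [if_neg (by omega : ¬ i = 0)]
              have := hh (i + 1)
              rwa [show m + 1 + 1 - (i + 1) = m + 1 - i by omega] at this
          have heq' : ∑ i ∈ Finset.range (m + 1), y ^ i * g' i
              = ∑ i ∈ Finset.range (m + 2), y ^ i * h' i := by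
            have e3 : ∑ i ∈ Finset.range (m + 2), y ^ i * h' i
                = h' 0 + y * ∑ i ∈ Finset.range (m + 1), y ^ i * h' (i + 1) := hfact h' (m + 1)
            have e4 : ∑ i ∈ Finset.range (m + 1), y ^ i * h' (i + 1)
                = ∑ i ∈ Finset.range (m + 1), y ^ i * h (i + 2) := by
              apply Finset.sum_congr rfl
              intro i _
              simp [hh'def]
            have e5 : Bb = h 1 + y * ∑ i ∈ Finset.range (m + 1), y ^ i * h (i + 2) := by
              rw [hB]
              exact hfact (fun i => h (i + 1)) (m + 1)
            rw [e3, e4]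
            have hh'0 : h' 0 = h 1 - w := by simp [hh'def]
            rw [hh'0, hw]
            have : ∑ i ∈ Finset.range (m + 1), y ^ i * g' i = A := by rw [hA]
            rw [this]
            linear_combination e5
          obtain ⟨q, hq, hgq⟩ := ihm g' h' hg' hh' heq' j
          refine ⟨q, ?_, ?_⟩
          · rwa [show m + 1 - (j + 1) = m - j by omega]
          · rwa [show m + 1 + 1 - (j + 1) = m + 1 - j by omega]
    -- now put everything together
    obtain ⟨h, hh, hdec⟩ := hD (n + 1) _ hf
    set g : ℕ → B := fun j => if hj : j ≤ n then phi x' (n - j) (fiber f j hj) else 0 with hgdef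
    have hgmem : ∀ j, g j ∈ I' ^ (n - j) := by
      intro j
      by_cases hj : j ≤ n
      · rw [hgdef]
        simp only [dif_pos hj]
        have hmem : phi x' (n - j) (fiber f j hj) ∈ LinearMap.range (phi x' (n - j)) := ⟨_, rfl⟩
        rw [range_phi] at hmem
        exact hmem
      · rw [hgdef]
        simp only [dif_neg hj]
        exact Submodule.zero_mem _
    have hphid : phi x n f = ∑ j ∈ Finset.range (n + 1), y ^ j * g j :=
      phi_decomp x n f g (fun j hj => by rw [hgdef]; simp only [dif_pos hj]; rfl)
    have heq : ∑ j ∈ Finset.range (n + 1), y ^ j * g j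
        = ∑ j ∈ Finset.range (n + 2), y ^ j * h j := by
      rw [← hphid]
      exact hdec
    have hSS := hS n g h hgmem hh heq
    have hjn : d.1 (Fin.last r) ≤ n := by
      have := apply_le_deg d.1 (Fin.last r)
      rw [d.deg_eq] at this
      omega
    obtain ⟨q, hq, hgq⟩ := hSS (d.1 (Fin.last r))
    obtain ⟨u, hu⟩ : ∃ u : Mon r (n - d.1 (Fin.last r)) →₀ B,
        phi x' (n - d.1 (Fin.last r)) u = q := by
      have hmem : q ∈ LinearMap.range (phi x' (n - d.1 (Fin.last r))) := by
        rw [range_phi]; exact hq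
      obtain ⟨u, hu⟩ := hmem; exact ⟨u, hu⟩
    have hval : phi x' (n - d.1 (Fin.last r)) (fiber f (d.1 (Fin.last r)) hjn - y • u)
        = g (d.1 (Fin.last r)) - y * q := by
      rw [map_sub, map_smul, hu, smul_eq_mul, hgdef]
      simp only [dif_pos hjn]
    have hvmem : phi x' (n - d.1 (Fin.last r)) (fiber f (d.1 (Fin.last r)) hjn - y • u)
        ∈ I' ^ ((n - d.1 (Fin.last r)) + 1) := by
      rw [hval]
      have hexp : n + 1 - d.1 (Fin.last r) = (n - d.1 (Fin.last r)) + 1 := by omega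
      rw [← hexp]
      exact hgq
    have hcoe := IH x' hx' (n - d.1 (Fin.last r)) _ hvmem (splitMon n (d.1 (Fin.last r)) d rfl)
    have hfd : fiber f (d.1 (Fin.last r)) hjn (splitMon n (d.1 (Fin.last r)) d rfl) = f d := by
      rw [fiber_apply, membMon_splitMon n (d.1 (Fin.last r)) hjn d rfl]
    have hmem2 : f d - y * u (splitMon n (d.1 (Fin.last r)) d rfl) ∈ I' := by
      simpa [Finsupp.sub_apply, Finsupp.smul_apply, smul_eq_mul, hfd] using hcoe
    have hrw : f d = (f d - y * u (splitMon n (d.1 (Fin.last r)) d rfl))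
        + y * u (splitMon n (d.1 (Fin.last r)) d rfl) := by ring
    rw [hrw]
    exact Submodule.add_mem _ (hI'I hmem2) (Ideal.mul_mem_right _ _ hyI)

open RingTheory.Sequence in
theorem piece_equiv {r : ℕ} (x : Fin r → B) (hx : IsWeaklyRegular B (List.ofFn x)) (n : ℕ) :
    Nonempty ((↥((Ideal.span (Set.range x)) ^ n) ⧸
        Submodule.comap (Submodule.subtype ((Ideal.span (Set.range x)) ^ n))
          ((Ideal.span (Set.range x)) ^ (n + 1)))
      ≃ₗ[B] (Mon r n →₀ B ⧸ Ideal.span (Set.range x))) := by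
  classical
  set I := Ideal.span (Set.range x) with hI
  have hrange : ∀ c : Mon r n →₀ B, phi x n c ∈ (I ^ n : Ideal B) := by
    intro c
    have hm : phi x n c ∈ LinearMap.range (phi x n) := ⟨c, rfl⟩
    rwa [range_phi] at hm
  set ψ0 : (Mon r n →₀ B) →ₗ[B] ↥(I ^ n : Ideal B) :=
    LinearMap.codRestrict _ (phi x n) hrange with hψ0
  set ψ : (Mon r n →₀ B) →ₗ[B]
      (↥(I ^ n : Ideal B) ⧸ Submodule.comap (Submodule.subtype (I ^ n)) (I ^ (n + 1))) :=
    (Submodule.mkQ _).comp ψ0 with hψ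
  have hψsurj : Function.Surjective ψ := by
    apply Function.Surjective.comp (Submodule.mkQ_surjective _)
    intro b
    have hb : (b : B) ∈ LinearMap.range (phi x n) := by rw [range_phi]; exact b.2
    obtain ⟨c, hc⟩ := hb
    exact ⟨c, Subtype.ext hc⟩
  set θ : (Mon r n →₀ B) →ₗ[B] (Mon r n →₀ B ⧸ I) :=
    Finsupp.mapRange.linearMap (Submodule.mkQ I) with hθ
  have hθapp : ∀ (c : Mon r n →₀ B) (dd : Mon r n), θ c dd = Submodule.Quotient.mk (c dd) := by
    intro c dd
    simp [hθ, Finsupp.mapRange.linearMap, Finsupp.mapRange_apply]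
    rfl
  have hθsurj : Function.Surjective θ := by
    intro g
    obtain ⟨c, hc⟩ := Finsupp.mapRange_surjective (⇑(Submodule.mkQ I)) (map_zero _)
      (Submodule.mkQ_surjective I) g
    exact ⟨c, by ext dd; rw [hθapp, ← hc]; simp [Finsupp.mapRange_apply]⟩
  have hψ0coe : ∀ c, ((ψ0 c : ↥(I ^ n : Ideal B)) : B) = phi x n c := fun c => rfl
  have hψzero : ∀ c, ψ c = 0 ↔ phi x n c ∈ (I ^ (n + 1) : Ideal B) := by
    intro c
    rw [hψ, LinearMap.comp_apply, Submodule.mkQ_apply, Submodule.Quotient.mk_eq_zero,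
      Submodule.mem_comap, Submodule.subtype_apply, hψ0coe]
  have hker : LinearMap.ker ψ = LinearMap.ker θ := by
    ext c
    simp only [LinearMap.mem_ker]
    constructor
    · intro hc
      have hmem := (hψzero c).mp hc
      have hco : ∀ dd : Mon r n, c dd ∈ I := fun dd => quasireg x hx n c hmem dd
      ext dd
      rw [hθapp]
      simpa using (Submodule.Quotient.mk_eq_zero I).mpr (hco dd)
    · intro hc
      have hco : ∀ dd : Mon r n, c dd ∈ I := by
        intro dd
        have h2 : θ c dd = 0 := by rw [hc]; rfl
        rw [hθapp] at h2
        exact (Submodule.Quotient.mk_eq_zero I).mp h2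
      apply (hψzero c).mpr
      rw [phi_apply, Finsupp.sum]
      apply Submodule.sum_mem
      intro dd _
      rw [pow_succ']
      exact Ideal.mul_mem_mul (hco dd) (mono_mem x dd.deg_eq)
  exact ⟨(ψ.quotKerEquivOfSurjective hψsurj).symm.trans
    ((Submodule.quotEquivOfEq _ _ hker).trans (θ.quotKerEquivOfSurjective hθsurj))⟩

end AGPF

/-- Let `B` be a commutative ring and `I ⊂ B` an ideal generated by a regular sequence
`x₁, …, xᵣ`.  Then the associated graded ring `gr_I(B) = ⊕ Iⁿ/Iⁿ⁺¹` is the polynomial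
ring `(B/I)[T₁, …, Tᵣ]`: in each degree `n`, the piece `Iⁿ/Iⁿ⁺¹` is linearly isomorphic
to the free `B/I`-module on the monomials of degree `n` in `r` variables (the `B`-module
structure on the latter being induced by `B → B/I`); in particular `Iⁿ/Iⁿ⁺¹` is a free
`B/I`-module of rank the number of degree-`n` monomials in `r` variables. -/
theorem associatedGraded_piece_free
    (B : Type*) [CommRing B] (r : ℕ) (x : Fin r → B)
    (hreg : RingTheory.Sequence.IsRegular B (List.ofFn x))
    (I : Ideal B) (hI : I = Ideal.span (Set.range x)) (n : ℕ) :
    Nonempty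
      ((↥(I ^ n) ⧸ Submodule.comap (Submodule.subtype (I ^ n)) (I ^ (n + 1)))
        ≃ₗ[B] ({d : Fin r →₀ ℕ // (d.sum fun _ m => m) = n} →₀ B ⧸ I)) := by
  subst hI
  exact AGPF.piece_equiv x hreg.toIsWeaklyRegular n
end

section
/- Let B = (W → S, I, b, E) be a basic object over artinian local A. If C and C' are irreducible B-permissible centers having a common point y with I(C)_y = I(C')_y, then C = C' as subschemes of W. -/
section Aux

variable {B : Type*} [CommRing B] [IsNoetherianRing B]

lemma aux_smul_mk {B : Type*} [CommRing B] (I : Ideal B) (r x : B) :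
    r • (Ideal.Quotient.mk I x) = Ideal.Quotient.mk I (r * x) := rfl

lemma aux_ann_iff {B : Type*} [CommRing B] (I : Ideal B) (r x : B) :
    r ∈ (Submodule.span B {Ideal.Quotient.mk I x}).annihilator ↔ r * x ∈ I := by
  rw [Submodule.mem_annihilator_span_singleton, aux_smul_mk, Ideal.Quotient.eq_zero_iff_mem]

/-- Membership in the localized ideal in terms of the original ring. -/
lemma aux_loc_mem_iff (J : Ideal B) (p : Ideal B) [p.IsPrime] (z : B) :
    algebraMap B (Localization.AtPrime p) z ∈
      J.map (algebraMap B (Localization.AtPrime p)) ↔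
    ∃ t ∈ p.primeCompl, t * z ∈ J := by
  constructor
  · intro h
    obtain ⟨⟨a, s⟩, hx⟩ := (IsLocalization.mem_map_algebraMap_iff p.primeCompl _).mp h
    rw [← map_mul] at hx
    obtain ⟨c, hc⟩ := (IsLocalization.eq_iff_exists p.primeCompl _).mp hx
    refine ⟨c * s, mul_mem c.2 s.2, ?_⟩
    have h2 : (c : B) * s * z = (c : B) * a := by linear_combination hc
    rw [h2]
    exact J.mul_mem_left _ a.2
  · rintro ⟨t, ht, htz⟩
    have hu : IsUnit (algebraMap B (Localization.AtPrime p) t) :=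
      IsLocalization.map_units _ (⟨t, ht⟩ : p.primeCompl)
    have h3 : algebraMap B (Localization.AtPrime p) (t * z) ∈
        J.map (algebraMap B (Localization.AtPrime p)) := Ideal.mem_map_of_mem _ htz
    rw [map_mul] at h3
    exact (Ideal.unit_mul_mem_iff_mem _ hu).mp h3

/-- There exists an associated prime of `B ⧸ J` contained in `p`, provided `J ≤ p`. -/
lemma aux_exists_assoc_le (J : Ideal B) (p : Ideal B) [p.IsPrime] (hJp : J ≤ p) :
    ∃ q ∈ associatedPrimes B (B ⧸ J), q ≤ p := by
  set L := Localization.AtPrime p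
  set φ := algebraMap B L with hφ
  set Jp := J.map φ with hJpdef
  have hne : Jp ≠ ⊤ := by
    intro h
    have h1 : φ 1 ∈ Jp := by rw [h]; trivial
    obtain ⟨t, ht, htz⟩ := (aux_loc_mem_iff J p 1).mp h1
    rw [mul_one] at htz
    exact ht (hJp htz)
  have : IsNoetherianRing L := IsLocalization.isNoetherianRing p.primeCompl L ‹_›
  have : Nontrivial (L ⧸ Jp) := Ideal.Quotient.nontrivial_iff.mpr hne
  obtain ⟨P, hP⟩ := associatedPrimes.nonempty L (L ⧸ Jp)
  obtain ⟨hPprime, x, hx⟩ := (Submodule.isAssociatedPrime_iff (N := (⊥ : Submodule L (L ⧸ Jp)))).mp hP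
  rw [Submodule.bot_colon'] at hx
  obtain ⟨x', rfl⟩ := Ideal.Quotient.mk_surjective x
  obtain ⟨⟨a, s⟩, rfl⟩ := IsLocalization.mk'_surjective p.primeCompl x'
  have hus : IsUnit (φ (s : B)) := IsLocalization.map_units _ s
  -- P is the annihilator of the class of φ a
  have hPa : ∀ r : L, r ∈ P ↔ r * φ a ∈ Jp := by
    intro r
    rw [hx, aux_ann_iff]
    have key : r * φ a = φ ↑s * (r * IsLocalization.mk' L a s) := by
      rw [hφ, ← IsLocalization.mk'_spec L a s]; ring
    rw [key, Ideal.unit_mul_mem_iff_mem Jp hus]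
  -- the contraction of P
  set C := P.comap φ with hC
  have hCprime : C.IsPrime := Ideal.IsPrime.comap φ
  have hCle : C ≤ p := by
    intro r hr
    by_contra hrp
    have hu : IsUnit (φ r) := IsLocalization.map_units _ (⟨r, hrp⟩ : p.primeCompl)
    exact hPprime.ne_top (P.eq_top_of_isUnit_mem hr hu)
  have hCmem : ∀ r : B, r ∈ C ↔ ∃ t ∈ p.primeCompl, t * (r * a) ∈ J := by
    intro r
    rw [hC, Ideal.mem_comap, hPa, ← map_mul]
    exact aux_loc_mem_iff J p (r * a)
  -- find a single multiplier for a finite generating set of C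
  obtain ⟨G, hG⟩ : C.FG := IsNoetherian.noetherian C
  choose tf htf1 htf2 using fun (g : B) (hg : g ∈ G) => (hCmem g).mp (hG ▸ Submodule.subset_span hg)
  classical
  set t : B := ∏ g ∈ G.attach, tf g.1 g.2 with htdef
  have htp : t ∈ p.primeCompl := prod_mem fun g _ => htf1 g.1 g.2
  have hCann : C = (Submodule.span B {Ideal.Quotient.mk J (t * a)}).annihilator := by
    apply le_antisymm
    · rw [← hG]
      refine Submodule.span_le.mpr ?_
      intro g hg
      rw [SetLike.mem_coe, aux_ann_iff]
      have ht' : t = tf g hg * ∏ h ∈ G.attach.erase ⟨g, hg⟩, tf h.1 h.2 := by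
        rw [htdef, ← Finset.mul_prod_erase G.attach _ (Finset.mem_attach G ⟨g, hg⟩)]
      rw [ht', show g * (tf g hg * (∏ h ∈ G.attach.erase ⟨g, hg⟩, tf h.1 h.2) * a) =
          (∏ h ∈ G.attach.erase ⟨g, hg⟩, tf h.1 h.2) * (tf g hg * (g * a)) by ring]
      exact J.mul_mem_left _ (htf2 g hg)
    · intro r hr
      rw [aux_ann_iff] at hr
      rw [hCmem]
      exact ⟨t, htp, by rwa [show t * (r * a) = r * (t * a) by ring]⟩
  exact ⟨C, (Submodule.isAssociatedPrime_iff (N := (⊥ : Submodule B (B ⧸ J)))).mpr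
    ⟨hCprime, Ideal.Quotient.mk J (t * a), by rw [Submodule.bot_colon']; exact hCann⟩, hCle⟩

/-- Saturation: if `B ⧸ J` has a unique associated prime and `J ≤ p`, then `J` is the
contraction of its localization at `p`. -/
lemma aux_saturation (J : Ideal B) (p : Ideal B) [p.IsPrime]
    (hq : ∃ q : Ideal B, associatedPrimes B (B ⧸ J) = {q}) (hJp : J ≤ p) :
    (J.map (algebraMap B (Localization.AtPrime p))).comap
      (algebraMap B (Localization.AtPrime p)) = J := by
  obtain ⟨q, hq⟩ := hq
  obtain ⟨q', hq', hq'p⟩ := aux_exists_assoc_le J p hJp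
  rw [hq, Set.mem_singleton_iff] at hq'
  subst hq'
  apply le_antisymm _ Ideal.le_comap_map
  intro x hx
  rw [Ideal.mem_comap] at hx
  obtain ⟨t, ht, htx⟩ := (aux_loc_mem_iff J p x).mp hx
  by_contra hxJ
  have hx0 : Ideal.Quotient.mk J x ≠ 0 := by
    rwa [Ne, Ideal.Quotient.eq_zero_iff_mem]
  obtain ⟨P, hP, hle⟩ :=
    exists_le_isAssociatedPrime_of_isNoetherianRing B (Ideal.Quotient.mk J x) hx0
  rw [← AssociatedPrimes.mem_iff, hq, Set.mem_singleton_iff] at hP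
  subst hP
  exact ht (hq'p (hle (by rw [Submodule.bot_colon']; exact (aux_ann_iff J t x).mpr htx)))

end Aux


/-- Affine model of: if `C` and `C'` are irreducible `B`-permissible centers of a smooth
`S`-scheme `W = Spec B` having a common point `y` (a prime `p` containing both defining
ideals) at which `I(C)_y = I(C')_y`, then `C = C'` as subschemes.  Here the defining
ideals `JC`, `JC'` are each generated by a regular sequence and each quotient is
irreducible Cohen–Macaulay without embedded points (exactly one associated prime); the
conclusion `C = C'` reads `JC = JC'`. -/
theorem center_eq_center_of_stalk_eq
    (B : Type*) [CommRing B] [IsNoetherianRing B]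
    (JC JC' : Ideal B)
    (hC : ∃ (m : ℕ) (f : Fin m → B),
      RingTheory.Sequence.IsRegular B (List.ofFn f) ∧ JC = Ideal.span (Set.range f))
    (hC' : ∃ (m : ℕ) (f : Fin m → B),
      RingTheory.Sequence.IsRegular B (List.ofFn f) ∧ JC' = Ideal.span (Set.range f))
    (hCirr : ∃ q : Ideal B, associatedPrimes B (B ⧸ JC) = {q})
    (hC'irr : ∃ q : Ideal B, associatedPrimes B (B ⧸ JC') = {q})
    (p : Ideal B) [p.IsPrime] (hpC : JC ≤ p) (hpC' : JC' ≤ p)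
    (hstalk : Ideal.map (algebraMap B (Localization.AtPrime p)) JC =
      Ideal.map (algebraMap B (Localization.AtPrime p)) JC') :
    JC = JC' := by
  have h1 := aux_saturation JC p hCirr hpC
  have h2 := aux_saturation JC' p hC'irr hpC'
  rw [← h1, ← h2, hstalk]
end

section
/- Let (I, b) be a weighted ideal on a scheme W smooth over S = Spec A (A artinian local, residue char 0), and define the homogenized ideal H(I/S, b) = I + Δ(I/S)·T + Δ²(I/S)·T² + ⋯ + Δ^{b−1}(I/S)·T^{b−1}, where T = Δ^{b−1}(I/S). Then Δ^{b−1}(I/S) = Δ^{b−1}(H(I/S,b)/S). -/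
universe u

/-- The relative first derivative ideal `Δ(I/S)`: the ideal generated by `I` together
with all derivatives `D f` of elements `f ∈ I` by `A`-linear derivations. -/
def deltaRel (A B : Type u) [CommRing A] [CommRing B] [Algebra A B] (I : Ideal B) :
    Ideal B :=
  I ⊔ Ideal.span {x : B | ∃ (D : Derivation A B B) (f : B), f ∈ I ∧ x = D f}

/-- The iterated relative derivative ideal `Δᵏ(I/S)`. -/
def deltaRelIter (A B : Type u) [CommRing A] [CommRing B] [Algebra A B] (k : ℕ)
    (I : Ideal B) : Ideal B :=
  (deltaRel A B)^[k] I

/-- The homogenized ideal of a weighted ideal `(I, b)` relative to `S`: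
`H(I/S, b) = I + Δ(I/S)·T + ⋯ + Δ^{b−1}(I/S)·T^{b−1}` where `T = Δ^{b−1}(I/S)`. -/
def homogenizedIdeal (A B : Type u) [CommRing A] [CommRing B] [Algebra A B]
    (I : Ideal B) (b : ℕ) : Ideal B :=
  ⨆ i ∈ Finset.range b, deltaRelIter A B i I * deltaRelIter A B (b - 1) I ^ i

section Aux

variable {A B : Type u} [CommRing A] [CommRing B] [Algebra A B]

lemma le_deltaRel (I : Ideal B) : I ≤ deltaRel A B I := le_sup_left

lemma deltaRel_mono {I J : Ideal B} (h : I ≤ J) : deltaRel A B I ≤ deltaRel A B J := by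
  refine sup_le_sup h (Ideal.span_mono ?_)
  rintro x ⟨D, f, hf, rfl⟩
  exact ⟨D, f, h hf, rfl⟩

lemma deltaRelIter_zero (I : Ideal B) : deltaRelIter A B 0 I = I := rfl

lemma deltaRelIter_succ (k : ℕ) (I : Ideal B) :
    deltaRelIter A B (k + 1) I = deltaRelIter A B k (deltaRel A B I) :=
  Function.iterate_succ_apply _ _ _

lemma deltaRelIter_succ' (k : ℕ) (I : Ideal B) :
    deltaRelIter A B (k + 1) I = deltaRel A B (deltaRelIter A B k I) :=
  Function.iterate_succ_apply' _ _ _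

lemma deltaRelIter_mono (k : ℕ) {I J : Ideal B} (h : I ≤ J) :
    deltaRelIter A B k I ≤ deltaRelIter A B k J := by
  induction k with
  | zero => exact h
  | succ k ih =>
      rw [deltaRelIter_succ', deltaRelIter_succ']
      exact deltaRel_mono ih

lemma deltaRelIter_mono_idx {m n : ℕ} (h : m ≤ n) (I : Ideal B) :
    deltaRelIter A B m I ≤ deltaRelIter A B n I := by
  refine monotone_nat_of_le_succ (f := fun k => deltaRelIter A B k I) (fun k => ?_) h
  show deltaRelIter A B k I ≤ deltaRelIter A B (k + 1) I
  rw [deltaRelIter_succ']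
  exact le_deltaRel _

lemma deltaRel_bot : deltaRel A B (⊥ : Ideal B) ≤ ⊥ := by
  refine sup_le le_rfl ((Ideal.span_le).2 ?_)
  rintro x ⟨D, f, hf, rfl⟩
  rw [Ideal.mem_bot] at hf
  subst hf
  simp

lemma deltaRelIter_bot (k : ℕ) : deltaRelIter A B k (⊥ : Ideal B) ≤ ⊥ := by
  induction k with
  | zero => exact le_rfl
  | succ k ih =>
      rw [deltaRelIter_succ']
      exact le_trans (deltaRel_mono ih) deltaRel_bot

lemma deltaRel_sup (I J : Ideal B) :
    deltaRel A B (I ⊔ J) ≤ deltaRel A B I ⊔ deltaRel A B J := by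
  refine sup_le (sup_le_sup (le_deltaRel I) (le_deltaRel J)) ((Ideal.span_le).2 ?_)
  rintro x ⟨D, f, hf, rfl⟩
  rcases Submodule.mem_sup.1 hf with ⟨g, hg, h', hh', rfl⟩
  rw [map_add]
  exact Submodule.add_mem_sup
    (le_sup_right (α := Ideal B) (Submodule.subset_span ⟨D, g, hg, rfl⟩))
    (le_sup_right (α := Ideal B) (Submodule.subset_span ⟨D, h', hh', rfl⟩))

lemma deltaRelIter_sup (k : ℕ) (I J : Ideal B) :
    deltaRelIter A B k (I ⊔ J) ≤ deltaRelIter A B k I ⊔ deltaRelIter A B k J := by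
  induction k with
  | zero => exact le_rfl
  | succ k ih =>
      rw [deltaRelIter_succ', deltaRelIter_succ' k I, deltaRelIter_succ' k J]
      exact le_trans (deltaRel_mono ih) (deltaRel_sup _ _)

lemma deltaRel_mul (I J : Ideal B) :
    deltaRel A B (I * J) ≤ deltaRel A B I * J ⊔ I * deltaRel A B J := by
  refine sup_le ?_ ((Ideal.span_le).2 ?_)
  · exact le_sup_left.trans' (Ideal.mul_mono_left (le_deltaRel I))
  · rintro x ⟨D, f, hf, rfl⟩
    refine Submodule.mul_induction_on hf (fun a ha c hc => ?_) (fun x y hx hy => ?_)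
    · rw [Derivation.leibniz, smul_eq_mul, smul_eq_mul]
      refine Submodule.add_mem _ ?_ ?_
      · exact le_sup_right (α := Ideal B)
          (Ideal.mul_mem_mul ha (le_sup_right (α := Ideal B)
            (Submodule.subset_span ⟨D, c, hc, rfl⟩)))
      · refine le_sup_left (α := Ideal B) ?_
        rw [mul_comm (deltaRel A B I) J]
        exact Ideal.mul_mem_mul hc (le_sup_right (α := Ideal B)
          (Submodule.subset_span ⟨D, a, ha, rfl⟩))
    · rw [map_add]; exact Submodule.add_mem _ hx hy

lemma deltaRel_pow_succ (T : Ideal B) (e : ℕ) :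
    deltaRel A B (T ^ (e + 1)) ≤ T ^ e := by
  induction e with
  | zero => rw [pow_zero, Ideal.one_eq_top]; exact le_top
  | succ e ih =>
      rw [pow_succ']
      refine le_trans (deltaRel_mul _ _) (sup_le ?_ ?_)
      · calc deltaRel A B T * T ^ (e + 1) ≤ T ^ (e + 1) := Ideal.mul_le_right
          _ ≤ T ^ (e + 1) := le_rfl
      · calc T * deltaRel A B (T ^ (e + 1)) ≤ T * T ^ e := Ideal.mul_mono_right ih
          _ = T ^ (e + 1) := (pow_succ' T e).symm

/-- The key estimate: iterated derivatives of `Δᵃ(I)·Tᵉ` stay inside `T = Δ^{b-1}(I)`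
as long as `a + j ≤ (b-1) + e`. -/
lemma deltaRel_key (I : Ideal B) (n : ℕ) :
    ∀ j a e : ℕ, a + j ≤ n + e →
      deltaRelIter A B j
        (deltaRelIter A B a I * (deltaRelIter A B n I) ^ e) ≤
      deltaRelIter A B n I := by
  intro j
  induction j with
  | zero =>
      intro a e h
      rw [deltaRelIter_zero]
      rcases Nat.eq_zero_or_pos e with he | he
      · subst he
        rw [pow_zero, Ideal.one_eq_top, Ideal.mul_top]
        exact deltaRelIter_mono_idx (by omega) I
      · calc deltaRelIter A B a I * deltaRelIter A B n I ^ e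
            ≤ deltaRelIter A B n I ^ e := Ideal.mul_le_right
          _ ≤ deltaRelIter A B n I ^ 1 := Ideal.pow_le_pow_right he
          _ = deltaRelIter A B n I := pow_one _
  | succ j ih =>
      intro a e h
      rw [deltaRelIter_succ]
      rcases Nat.eq_zero_or_pos e with he | he
      · subst he
        refine le_trans (deltaRelIter_mono j ?_) (ih (a + 1) 0 (by omega))
        rw [pow_zero, Ideal.one_eq_top, Ideal.mul_top, Ideal.mul_top,
          ← deltaRelIter_succ']
      · obtain ⟨e, rfl⟩ := Nat.exists_eq_add_of_lt he
        rw [Nat.zero_add] at *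
        have step : deltaRel A B (deltaRelIter A B a I * deltaRelIter A B n I ^ (e + 1)) ≤
            deltaRelIter A B (a + 1) I * deltaRelIter A B n I ^ (e + 1) ⊔
              deltaRelIter A B a I * deltaRelIter A B n I ^ e := by
          refine le_trans (deltaRel_mul _ _) (sup_le_sup ?_ ?_)
          · rw [deltaRelIter_succ']
          · exact Ideal.mul_mono_right (deltaRel_pow_succ _ _)
        refine le_trans (deltaRelIter_mono j step) ?_
        refine le_trans (deltaRelIter_sup j _ _) (sup_le ?_ ?_)
        · exact ih (a + 1) (e + 1) (by omega)
        · exact ih a e (by omega)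

end Aux

/-- For a weighted ideal `(I, b)` on a scheme `W = Spec B` smooth over `S = Spec A`
(`A` artinian local with residue characteristic zero), homogenization does not change
the top derivative ideal: `Δ^{b−1}(I/S) = Δ^{b−1}(H(I/S, b)/S)`. -/
theorem delta_homogenized_eq
    (A B : Type u) [CommRing A] [IsArtinianRing A] [IsLocalRing A]
    [CharZero (IsLocalRing.ResidueField A)]
    [CommRing B] [Algebra A B] [Algebra.Smooth A B]
    (I : Ideal B) (b : ℕ) (hb : 0 < b) :
    deltaRelIter A B (b - 1) I =
      deltaRelIter A B (b - 1) (homogenizedIdeal A B I b) := by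
  refine le_antisymm ?_ ?_
  · -- `I ≤ H`, so apply monotonicity
    refine deltaRelIter_mono _ ?_
    have h0 : deltaRelIter A B 0 I * deltaRelIter A B (b - 1) I ^ 0 ≤
        homogenizedIdeal A B I b := by
      refine le_iSup₂_of_le 0 (Finset.mem_range.2 hb) le_rfl
    simpa [deltaRelIter_zero] using h0
  · -- `Δ^{b-1}(H) ≤ Δ^{b-1}(I)` via the key estimate and commuting with finite sups
    unfold homogenizedIdeal
    have hsup : ∀ (s : Finset ℕ),
        deltaRelIter A B (b - 1)
          (⨆ i ∈ s, deltaRelIter A B i I * deltaRelIter A B (b - 1) I ^ i) ≤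
        ⨆ i ∈ s, deltaRelIter A B (b - 1)
          (deltaRelIter A B i I * deltaRelIter A B (b - 1) I ^ i) := by
      intro s
      induction s using Finset.induction with
      | empty =>
          simpa using deltaRelIter_bot (A := A) (B := B) (b - 1)
      | @insert a s ha ih =>
          rw [Finset.iSup_insert, Finset.iSup_insert]
          exact le_trans (deltaRelIter_sup _ _ _) (sup_le_sup le_rfl ih)
    refine le_trans (hsup (Finset.range b)) ?_
    refine iSup₂_le fun i hi => ?_
    exact deltaRel_key I (b - 1) (b - 1) i i (by omega)
end
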